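/- Because WeakAXp is monotone, the two definitions of abductive explanation coincide: for any X ⊆ F, X satisfies WeakAXp(X) together with ∀ X' ⊊ X, ¬WeakAXp(X') if and only if X satisfies WeakAXp(X) together with ∀ j ∈ X, ¬WeakAXp(X \ {j}). In other words, a set is a subset-minimal weak AXp iff it is a locally-minimal weak AXp. -/
import Mathlib


/-- `WeakAXp X` holds iff every point of feature space agreeing with `v` on `X`
is assigned the same class `c = κ v`. -/
def WeakAXp {m : ℕ} {D : Fin m → Type*} {K : Type*}
    (κ : (∀ i, D i) → K) (v : ∀ i, D i) (X : Finset (Fin m)) : Prop :=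
  ∀ x : ∀ i, D i, (∀ i ∈ X, x i = v i) → κ x = κ v

/-- A set is a subset-minimal weak AXp iff it is a locally-minimal weak AXp. -/
theorem axp_iff_locally_minimal_axp
    {m : ℕ} {D : Fin m → Type*} [∀ i, Fintype (D i)] [∀ i, Nonempty (D i)]
    {K : Type*} (κ : (∀ i, D i) → K) (v : ∀ i, D i) (X : Finset (Fin m)) :
    (WeakAXp κ v X ∧ ∀ X' ⊂ X, ¬ WeakAXp κ v X') ↔
    (WeakAXp κ v X ∧ ∀ j ∈ X, ¬ WeakAXp κ v (X \ {j})) := by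
  have mono : ∀ ⦃A B : Finset (Fin m)⦄, A ⊆ B → WeakAXp κ v A → WeakAXp κ v B := by
    intro A B hAB h x hx
    exact h x fun i hi => hx i (hAB hi)
  constructor
  · rintro ⟨h, hmin⟩
    exact ⟨h, fun j hj => hmin _ (Finset.sdiff_subset.ssubset_of_ne (by
      intro he
      rw [← he] at hj
      simp at hj))⟩
  · rintro ⟨h, hloc⟩
    refine ⟨h, fun X' hX' hw => ?_⟩
    obtain ⟨j, hjX, hjX'⟩ := Finset.exists_of_ssubset hX'
    exact hloc j hjX (mono (fun i hi => Finset.mem_sdiff.2 ⟨hX'.subset hi, by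
      simp; rintro rfl; exact hjX' hi⟩) hw)
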